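/- arXiv:2512.04006 — 3 statements merged into one kernel-verified Lean document; each statement's English description precedes it below -/
import Mathlib

section
/- Let K = 2^m for a natural number m ≥ 1, let Φ be the K×K Sylvester Hadamard matrix, let X = Φ[2:K, 2:K] be the submatrix obtained by deleting the first row and first column of Φ, and let Ψ = 1_{K−1} 1_{K−1}ᵀ − X ∈ ℝ^{(K−1)×(K−1)}. Then: (i) every entry of Ψ lies in {0, 2}; (ii) Ψ·1_{K−1} = K·1_{K−1}; (iii) Ψ² = K·I_{K−1} + K·1_{K−1} 1_{K−1}ᵀ; (iv) every column ψ_u of Ψ has Euclidean norm ‖ψ_u‖₂ = √(2K); and (v) Ψ is invertible with Ψ⁻¹·1_{K−1} = (1/K)·1_{K−1}. -/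
open Matrix Finset

noncomputable section

/-- The Sylvester Hadamard matrix `Φ_{2^m}`, defined recursively by `Φ₁ = (1)` and
`Φ_{2^{m+1}} = [[Φ_{2^m}, Φ_{2^m}], [Φ_{2^m}, -Φ_{2^m}]]`. -/
def sylvester : (m : ℕ) → Matrix (Fin (2 ^ m)) (Fin (2 ^ m)) ℝ
  | 0 => Matrix.of fun _ _ => 1
  | m + 1 => Matrix.of fun i j =>
      (if 2 ^ m ≤ i.val ∧ 2 ^ m ≤ j.val then -1 else 1) *
        sylvester m ⟨i.val % 2 ^ m, Nat.mod_lt _ (Nat.two_pow_pos m)⟩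
          ⟨j.val % 2 ^ m, Nat.mod_lt _ (Nat.two_pow_pos m)⟩

/-- The core `X = Φ[2:K, 2:K]` obtained by deleting the first row and column of `Φ`. -/
def hadCore (m : ℕ) : Matrix (Fin (2 ^ m - 1)) (Fin (2 ^ m - 1)) ℝ :=
  Matrix.of fun i j =>
    sylvester m ⟨i.val + 1, by have h1 := Nat.two_pow_pos m; have h2 := i.isLt; omega⟩
      ⟨j.val + 1, by have h1 := Nat.two_pow_pos m; have h2 := j.isLt; omega⟩

/-- `Ψ = 1 1ᵀ − X`. -/
def PsiM (m : ℕ) : Matrix (Fin (2 ^ m - 1)) (Fin (2 ^ m - 1)) ℝ :=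
  Matrix.of fun i j => 1 - hadCore m i j

/-- `b_i(a) = Σ_j Ψ_{ij} exp(−(Ψa)_j)`. -/
def bVec (m : ℕ) (a : Fin (2 ^ m - 1) → ℝ) (i : Fin (2 ^ m - 1)) : ℝ :=
  ∑ j, PsiM m i j * Real.exp (-((PsiM m).mulVec a j))

/-- `D(a) = 1 + Σ_j exp(−(Ψa)_j)`. -/
def Dden (m : ℕ) (a : Fin (2 ^ m - 1) → ℝ) : ℝ :=
  1 + ∑ j, Real.exp (-((PsiM m).mulVec a j))

/-- The energy `E(a) = log(1 + Σ_j exp(−(Ψa)_j))`. -/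
def energyE (m : ℕ) (a : Fin (2 ^ m - 1) → ℝ) : ℝ :=
  Real.log (1 + ∑ j, Real.exp (-((PsiM m).mulVec a j)))

/-- `b̄(a) = Σ_j â_j b_j(a)` with `â = a / ‖a‖₁`. -/
def bbar (m : ℕ) (a : Fin (2 ^ m - 1) → ℝ) : ℝ :=
  ∑ j, (a j / ∑ k, a k) * bVec m a j

/-- `M(a) = (1/2) Σ_i (â_i − 1/(K−1))²`. -/
def Mmetric (m : ℕ) (a : Fin (2 ^ m - 1) → ℝ) : ℝ :=
  (1 / 2) * ∑ i, (a i / (∑ k, a k) - 1 / ((2 : ℝ) ^ m - 1)) ^ 2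

def sylv : ℕ → ℕ → ℕ → ℝ
  | 0, _, _ => 1
  | m + 1, i, j => (if 2 ^ m ≤ i ∧ 2 ^ m ≤ j then -1 else 1) * sylv m (i % 2 ^ m) (j % 2 ^ m)

lemma sylv_symm (m : ℕ) : ∀ i j, sylv m i j = sylv m j i := by
  induction m with
  | zero => intro i j; rfl
  | succ m ih => intro i j; simp only [sylv, ih (i % 2 ^ m), and_comm]

lemma sylv_pm (m : ℕ) : ∀ i j, sylv m i j = 1 ∨ sylv m i j = -1 := by
  induction m with
  | zero => intro i j; left; rfl
  | succ m ih =>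
    intro i j
    rcases ih (i % 2 ^ m) (j % 2 ^ m) with h | h <;>
      simp only [sylv, h] <;> split_ifs <;> norm_num

lemma sylv_zero_right (m : ℕ) : ∀ i, sylv m i 0 = 1 := by
  induction m with
  | zero => intro i; rfl
  | succ m ih =>
    intro i
    have h : ¬ (2 ^ m ≤ 0) := Nat.not_le.mpr (Nat.two_pow_pos m)
    simp [sylv, h, ih]

lemma sylv_zero_left (m : ℕ) (j : ℕ) : sylv m 0 j = 1 := by
  rw [sylv_symm]; exact sylv_zero_right m j

lemma sum_range_add' (f : ℕ → ℝ) (a b : ℕ) :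
    ∑ k ∈ range (a + b), f k = (∑ k ∈ range a, f k) + ∑ k ∈ range b, f (a + k) := by
  induction b with
  | zero => simp
  | succ b ih => rw [← Nat.add_assoc, Finset.sum_range_succ, ih, Finset.sum_range_succ, add_assoc]

lemma sylv_orth : ∀ m : ℕ, ∀ i j : ℕ, i < 2 ^ m → j < 2 ^ m →
    ∑ k ∈ range (2 ^ m), sylv m i k * sylv m j k = if i = j then ((2 ^ m : ℕ) : ℝ) else 0 := by
  intro m
  induction m with
  | zero => intro i j hi hj; interval_cases i <;> interval_cases j <;> simp [sylv]
  | succ m ih =>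
    intro i j hi hj
    set P := 2 ^ m with hP
    have hP0 : 0 < P := Nat.two_pow_pos m
    have h2 : 2 ^ (m + 1) = P + P := by rw [pow_succ]; omega
    have hmod : ∀ t : ℕ, t < P → t % P = t := fun t ht => Nat.mod_eq_of_lt ht
    have himod : ∀ t : ℕ, t < P + P → t % P = if P ≤ t then t - P else t := by
      intro t ht
      split_ifs with h
      · rw [Nat.mod_eq_sub_mod h, Nat.mod_eq_of_lt (by omega)]
      · exact Nat.mod_eq_of_lt (by omega)
    have e1 : ∀ a k : ℕ, k < P → sylv (m + 1) a k = sylv m (a % P) k := by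
      intro a k hk
      have : ¬ (P ≤ k) := by omega
      simp only [sylv, ← hP, this, and_false, if_false, one_mul, hmod k hk]
    have e2 : ∀ a k : ℕ, k < P →
        sylv (m + 1) a (P + k) = (if P ≤ a then (-1 : ℝ) else 1) * sylv m (a % P) k := by
      intro a k hk
      have h1 : P ≤ P + k := Nat.le_add_right _ _
      have h3 : (P + k) % P = k := by rw [Nat.add_mod_left, hmod k hk]
      simp only [sylv, ← hP, h1, and_true, h3]
    rw [h2, sum_range_add']
    have key := ih (i % P) (j % P) (Nat.mod_lt _ hP0) (Nat.mod_lt _ hP0)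
    have hs1 : ∑ k ∈ range P, sylv (m + 1) i k * sylv (m + 1) j k
        = if i % P = j % P then (P : ℝ) else 0 := by
      rw [← key]
      exact Finset.sum_congr rfl fun k hk => by
        rw [e1 i k (mem_range.mp hk), e1 j k (mem_range.mp hk)]
    have hs2 : ∑ k ∈ range P, sylv (m + 1) i (P + k) * sylv (m + 1) j (P + k)
        = ((if P ≤ i then (-1 : ℝ) else 1) * (if P ≤ j then (-1 : ℝ) else 1)) *
          (if i % P = j % P then (P : ℝ) else 0) := by
      rw [← key, Finset.mul_sum]
      exact Finset.sum_congr rfl fun k hk => by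
        rw [e2 i k (mem_range.mp hk), e2 j k (mem_range.mp hk)]; ring
    rw [hs1, hs2]
    rw [h2] at hi hj
    by_cases hij : i = j
    · subst hij
      simp only [if_pos rfl]
      push_cast
      split_ifs <;> ring
    · rw [if_neg hij]
      by_cases hm : i % P = j % P
      · have hi' := himod i (by omega)
        have hj' := himod j (by omega)
        have hxor : (P ≤ i) ↔ ¬ (P ≤ j) := by
          constructor
          · intro h1 h2'
            rw [if_pos h1] at hi'; rw [if_pos h2'] at hj'; omega
          · intro h2'
            by_contra h1
            rw [if_neg h1] at hi'; rw [if_neg h2'] at hj'; omega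
        rw [if_pos hm]
        by_cases h1 : P ≤ i
        · rw [if_pos h1, if_neg (hxor.mp h1)]; ring
        · rw [if_neg h1, if_pos (by by_contra hc; exact h1 (hxor.mpr hc))]; ring
      · rw [if_neg hm]; ring

lemma sylv_rowsum (m i : ℕ) (hi : i < 2 ^ m) :
    ∑ k ∈ range (2 ^ m), sylv m i k = if i = 0 then ((2 ^ m : ℕ) : ℝ) else 0 := by
  have h := sylv_orth m i 0 hi (Nat.two_pow_pos m)
  calc ∑ k ∈ range (2 ^ m), sylv m i k
      = ∑ k ∈ range (2 ^ m), sylv m i k * sylv m 0 k :=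
        Finset.sum_congr rfl fun k _ => by rw [sylv_zero_left, mul_one]
    _ = _ := h

lemma hK (m : ℕ) : 2 ^ m - 1 + 1 = 2 ^ m := by have := Nat.two_pow_pos m; omega

lemma psi_rowsum (m a : ℕ) (ha : a + 1 < 2 ^ m) :
    ∑ t ∈ range (2 ^ m - 1), (1 - sylv m (a + 1) (t + 1)) = ((2 ^ m : ℕ) : ℝ) := by
  have h1 : ∑ t ∈ range (2 ^ m - 1), sylv m (a + 1) (t + 1) = -1 := by
    have hs := sylv_rowsum m (a + 1) ha
    rw [← hK m, Finset.sum_range_succ'] at hs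
    rw [sylv_zero_right, if_neg (by omega : ¬ a + 1 = 0)] at hs
    linarith
  rw [Finset.sum_sub_distrib, h1, Finset.sum_const, card_range, nsmul_eq_mul, mul_one]
  have h2 : 1 ≤ 2 ^ m := Nat.one_le_two_pow
  push_cast [h2]
  ring

lemma psi_mulsum (m a b : ℕ) (ha : a + 1 < 2 ^ m) (hb : b + 1 < 2 ^ m) :
    ∑ t ∈ range (2 ^ m - 1), (1 - sylv m (a + 1) (t + 1)) * (1 - sylv m (t + 1) (b + 1)) =
      (if a = b then ((2 ^ m : ℕ) : ℝ) else 0) + ((2 ^ m : ℕ) : ℝ) := by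
  have hsa : ∑ t ∈ range (2 ^ m - 1), sylv m (a + 1) (t + 1) = -1 := by
    have h := psi_rowsum m a ha
    rw [Finset.sum_sub_distrib, Finset.sum_const, card_range, nsmul_eq_mul, mul_one] at h
    have h2 : 1 ≤ 2 ^ m := Nat.one_le_two_pow
    have : ((2 ^ m - 1 : ℕ) : ℝ) = ((2 ^ m : ℕ) : ℝ) - 1 := by push_cast [h2]; ring
    rw [this] at h; linarith
  have hsb : ∑ t ∈ range (2 ^ m - 1), sylv m (b + 1) (t + 1) = -1 := by
    have h := psi_rowsum m b hb
    rw [Finset.sum_sub_distrib, Finset.sum_const, card_range, nsmul_eq_mul, mul_one] at h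
    have h2 : 1 ≤ 2 ^ m := Nat.one_le_two_pow
    have : ((2 ^ m - 1 : ℕ) : ℝ) = ((2 ^ m : ℕ) : ℝ) - 1 := by push_cast [h2]; ring
    rw [this] at h; linarith
  have horth : ∑ t ∈ range (2 ^ m - 1), sylv m (a + 1) (t + 1) * sylv m (b + 1) (t + 1)
      = (if a = b then ((2 ^ m : ℕ) : ℝ) else 0) - 1 := by
    have h := sylv_orth m (a + 1) (b + 1) ha hb
    rw [← hK m, Finset.sum_range_succ'] at h
    rw [sylv_zero_right, sylv_zero_right, mul_one] at h
    simp only [hK m] at h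
    have hab : (if a + 1 = b + 1 then ((2 ^ m : ℕ) : ℝ) else 0) = (if a = b then ((2 ^ m : ℕ) : ℝ) else 0) := by
      simp
    rw [hab] at h
    linarith
  calc ∑ t ∈ range (2 ^ m - 1), (1 - sylv m (a + 1) (t + 1)) * (1 - sylv m (t + 1) (b + 1))
      = ∑ t ∈ range (2 ^ m - 1), ((1 - sylv m (a + 1) (t + 1))
          - (sylv m (b + 1) (t + 1) - sylv m (a + 1) (t + 1) * sylv m (b + 1) (t + 1))) := by
        refine Finset.sum_congr rfl fun t _ => ?_
        rw [sylv_symm m (t + 1) (b + 1)]; ring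
    _ = _ := by
        rw [Finset.sum_sub_distrib, psi_rowsum m a ha, Finset.sum_sub_distrib, hsb, horth]
        ring


lemma sylvester_eq : ∀ (m : ℕ) (i j : Fin (2 ^ m)), sylvester m i j = sylv m i.val j.val := by
  intro m
  induction m with
  | zero => intro i j; rfl
  | succ m ih =>
    intro i j
    show (if _ then _ else _) * sylvester m _ _ = sylv (m + 1) i.val j.val
    rw [ih]
    rfl

lemma psi_apply (m : ℕ) (i j : Fin (2 ^ m - 1)) :
    PsiM m i j = 1 - sylv m (i.val + 1) (j.val + 1) := by
  show 1 - hadCore m i j = _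
  unfold hadCore
  rw [Matrix.of_apply, sylvester_eq]


/-- properties of `Ψ = 1 1ᵀ − X`.
For `K = 2^m` with `m ≥ 1`: (i) every entry of `Ψ` lies in `{0, 2}`;
(ii) `Ψ·1 = K·1`; (iii) `Ψ² = K·I + K·1 1ᵀ`; (iv) every column of `Ψ` has Euclidean
norm `√(2K)`; (v) `Ψ` is invertible with `Ψ⁻¹·1 = (1/K)·1`. -/
theorem Psi_basic_properties (m : ℕ) (hm : 1 ≤ m) :
    (∀ i j, PsiM m i j = 0 ∨ PsiM m i j = 2) ∧
    ((PsiM m).mulVec (fun _ => 1) = fun _ => (2 : ℝ) ^ m) ∧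
    (PsiM m * PsiM m =
      ((2 : ℝ) ^ m) • (1 : Matrix (Fin (2 ^ m - 1)) (Fin (2 ^ m - 1)) ℝ) +
      ((2 : ℝ) ^ m) • Matrix.of (fun _ _ => (1 : ℝ))) ∧
    (∀ u, Real.sqrt (∑ i, (PsiM m i u) ^ 2) = Real.sqrt (2 * 2 ^ m)) ∧
    (IsUnit (PsiM m) ∧ (PsiM m)⁻¹.mulVec (fun _ => 1) = fun _ => 1 / ((2 : ℝ) ^ m)) := by
  have hK1 : 1 ≤ 2 ^ m := Nat.one_le_two_pow
  have hcast : ((2 ^ m : ℕ) : ℝ) = (2 : ℝ) ^ m := by push_cast; ring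
  have hlt : ∀ i : Fin (2 ^ m - 1), i.val + 1 < 2 ^ m := fun i => by
    have := i.isLt; omega
  -- (i)
  have prop1 : ∀ i j, PsiM m i j = 0 ∨ PsiM m i j = 2 := by
    intro i j
    rw [psi_apply]
    rcases sylv_pm m (i.val + 1) (j.val + 1) with h | h <;> rw [h] <;> [left; right] <;> norm_num
  -- row sums
  have hrow : ∀ i : Fin (2 ^ m - 1), ∑ j, PsiM m i j = (2 : ℝ) ^ m := by
    intro i
    calc ∑ j, PsiM m i j
        = ∑ j : Fin (2 ^ m - 1), (fun t : ℕ => 1 - sylv m (i.val + 1) (t + 1)) j.val :=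
          Finset.sum_congr rfl fun j _ => psi_apply m i j
      _ = ∑ t ∈ range (2 ^ m - 1), (1 - sylv m (i.val + 1) (t + 1)) :=
          Fin.sum_univ_eq_sum_range (fun t : ℕ => 1 - sylv m (i.val + 1) (t + 1)) (2 ^ m - 1)
      _ = (2 : ℝ) ^ m := by rw [psi_rowsum m i.val (hlt i), hcast]
  have prop2 : (PsiM m).mulVec (fun _ => 1) = fun _ => (2 : ℝ) ^ m := by
    funext i
    simp only [Matrix.mulVec, dotProduct, mul_one]
    exact hrow i
  have hsymm : ∀ i j, PsiM m i j = PsiM m j i := fun i j => by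
    rw [psi_apply, psi_apply, sylv_symm]
  have hcol : ∀ u, ∑ i, PsiM m i u = (2 : ℝ) ^ m := fun u =>
    (Finset.sum_congr rfl fun i _ => hsymm i u).trans (hrow u)
  -- (iii)
  have prop3 : PsiM m * PsiM m =
      ((2 : ℝ) ^ m) • (1 : Matrix (Fin (2 ^ m - 1)) (Fin (2 ^ m - 1)) ℝ) +
      ((2 : ℝ) ^ m) • Matrix.of (fun _ _ => (1 : ℝ)) := by
    ext i j
    rw [Matrix.mul_apply]
    have step : ∑ k, PsiM m i k * PsiM m k j
        = ∑ t ∈ range (2 ^ m - 1),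
            (1 - sylv m (i.val + 1) (t + 1)) * (1 - sylv m (t + 1) (j.val + 1)) := by
      rw [← Fin.sum_univ_eq_sum_range
        (fun t => (1 - sylv m (i.val + 1) (t + 1)) * (1 - sylv m (t + 1) (j.val + 1))) (2 ^ m - 1)]
      exact Finset.sum_congr rfl fun k _ => by rw [psi_apply, psi_apply]
    rw [step, psi_mulsum m i.val j.val (hlt i) (hlt j)]
    simp only [Matrix.add_apply, Matrix.smul_apply, Matrix.one_apply, Matrix.of_apply,
      smul_eq_mul, mul_one]
    by_cases h : i = j
    · subst h; rw [if_pos rfl, if_pos rfl, hcast]; ring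
    · rw [if_neg (fun hc => h (Fin.ext hc)), if_neg h, hcast]; ring
  -- (iv)
  have prop4 : ∀ u, Real.sqrt (∑ i, (PsiM m i u) ^ 2) = Real.sqrt (2 * 2 ^ m) := by
    intro u
    have hsq : ∑ i, (PsiM m i u) ^ 2 = ∑ i, 2 * PsiM m i u :=
      Finset.sum_congr rfl fun i _ => by rcases prop1 i u with h | h <;> rw [h] <;> norm_num
    rw [hsq, ← Finset.mul_sum, hcol u]
  -- (v)
  have hKpos : (0 : ℝ) < (2 : ℝ) ^ m := by positivity
  set J : Matrix (Fin (2 ^ m - 1)) (Fin (2 ^ m - 1)) ℝ := Matrix.of (fun _ _ => (1 : ℝ)) with hJ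
  have hPsiJ : PsiM m * J = ((2 : ℝ) ^ m) • J := by
    ext i j
    rw [Matrix.mul_apply]
    simp only [hJ, Matrix.of_apply, Matrix.smul_apply, smul_eq_mul, mul_one]
    exact hrow i
  have hC : PsiM m * (((2 : ℝ) ^ m)⁻¹ • (PsiM m - J)) = 1 := by
    rw [Matrix.mul_smul, Matrix.mul_sub, prop3, hPsiJ, add_sub_cancel_right, smul_smul,
      inv_mul_cancel₀ (ne_of_gt hKpos), one_smul]
  have hUnit : IsUnit (PsiM m) := (Matrix.isUnit_iff_isUnit_det _).mpr (Matrix.isUnit_det_of_right_inverse hC)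
  have hinv : (PsiM m)⁻¹ = ((2 : ℝ) ^ m)⁻¹ • (PsiM m - J) := Matrix.inv_eq_right_inv hC
  have prop5 : (PsiM m)⁻¹.mulVec (fun _ => 1) = fun _ => 1 / ((2 : ℝ) ^ m) := by
    funext i
    rw [hinv, Matrix.smul_mulVec, Matrix.sub_mulVec, prop2]
    have hJv : J.mulVec (fun _ => (1 : ℝ)) = fun _ => ((2 ^ m - 1 : ℕ) : ℝ) := by
      funext t
      simp [Matrix.mulVec, dotProduct, hJ]
    rw [hJv]
    simp only [Pi.smul_apply, Pi.sub_apply, smul_eq_mul]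
    have hc : ((2 ^ m - 1 : ℕ) : ℝ) = (2 : ℝ) ^ m - 1 := by push_cast [hK1]; ring
    rw [hc]
    field_simp
    ring
  exact ⟨prop1, prop2, prop3, prop4, hUnit, prop5⟩
end
end

section
/- Let K = 2^m for a natural number m ≥ 1 and define the energy E(a) = log(1 + Σ_{j=1}^{K−1} exp(−(Ψa)_j)). If a : [0, ∞) → ℝ^{K−1} is a solution of the reduced cross-entropy gradient flow da_i/dt = a_i b_i(a)/D(a) with a_i(0) > 0 for all i, then d/dt E(a(t)) = −Σ_i a_i(t)·(b_i(a(t))/D(a(t)))² ≤ 0; in particular t ↦ E(a(t)) is nonincreasing. -/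
open Matrix Finset

noncomputable section

/- ---------- auxiliary lemmas ---------- -/

lemma sylvester_symm : ∀ m (i j : Fin (2 ^ m)), sylvester m i j = sylvester m j i := by
  intro m
  induction m with
  | zero => intro i j; rfl
  | succ m ih =>
    intro i j
    simp only [sylvester, Matrix.of_apply, and_comm]
    rw [ih]

lemma PsiM_symm (m : ℕ) (i j : Fin (2 ^ m - 1)) : PsiM m i j = PsiM m j i := by
  simp only [PsiM, hadCore, Matrix.of_apply]
  rw [sylvester_symm]

lemma Dden_pos (m : ℕ) (x : Fin (2 ^ m - 1) → ℝ) : 0 < Dden m x := by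
  have h : (0:ℝ) ≤ ∑ j, Real.exp (-((PsiM m).mulVec x j)) :=
    Finset.sum_nonneg fun j _ => (Real.exp_pos _).le
  unfold Dden; linarith

lemma continuous_bVec (m : ℕ) (i : Fin (2 ^ m - 1)) :
    Continuous fun x : Fin (2 ^ m - 1) → ℝ => bVec m x i := by
  simp only [bVec, Matrix.mulVec, dotProduct]
  fun_prop

lemma continuous_Dden (m : ℕ) :
    Continuous fun x : Fin (2 ^ m - 1) → ℝ => Dden m x := by
  simp only [Dden, Matrix.mulVec, dotProduct]
  fun_prop

/-- Chain rule for the energy along any differentiable path. -/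
lemma energy_deriv (m : ℕ) (a : ℝ → Fin (2 ^ m - 1) → ℝ) (t : ℝ)
    (v : Fin (2 ^ m - 1) → ℝ)
    (hv : ∀ i, HasDerivAt (fun s => a s i) (v i) t) :
    HasDerivAt (fun s => energyE m (a s))
      (-(∑ i, v i * bVec m (a t) i) / Dden m (a t)) t := by
  have hD : HasDerivAt (fun s => Dden m (a s))
      (∑ j, Real.exp (-((PsiM m).mulVec (a t) j)) * (-(∑ i, PsiM m j i * v i))) t := by
    have h1 : ∀ j, HasDerivAt (fun s => Real.exp (-((PsiM m).mulVec (a s) j)))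
        (Real.exp (-((PsiM m).mulVec (a t) j)) * (-(∑ i, PsiM m j i * v i))) t := by
      intro j
      have hinner : HasDerivAt (fun s => -((PsiM m).mulVec (a s) j))
          (-(∑ i, PsiM m j i * v i)) t := by
        simp only [Matrix.mulVec, dotProduct]
        exact (HasDerivAt.fun_sum fun i _ => (hv i).const_mul (PsiM m j i)).neg
      simpa [mul_comm] using hinner.exp
    have h2 := HasDerivAt.fun_sum (fun j (_ : j ∈ Finset.univ) => h1 j)
    simpa [Dden] using h2.const_add 1
  have hDne : Dden m (a t) ≠ 0 := (Dden_pos m (a t)).ne'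
  have hlog := (Real.hasDerivAt_log hDne).comp t hD
  have hfun : (fun s => energyE m (a s)) = Real.log ∘ fun s => Dden m (a s) := rfl
  rw [hfun]
  refine hlog.congr_deriv ?_
  have key : (∑ i, v i * bVec m (a t) i)
      = ∑ j, Real.exp (-((PsiM m).mulVec (a t) j)) * (∑ i, PsiM m j i * v i) := by
    simp only [bVec, Finset.mul_sum]
    rw [Finset.sum_comm]
    refine Finset.sum_congr rfl fun i _ => Finset.sum_congr rfl fun j _ => ?_
    rw [PsiM_symm]; ring
  rw [key, div_eq_inv_mul]
  simp only [mul_neg, Finset.sum_neg_distrib]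

/-- Positivity is preserved along the flow. -/
lemma flow_pos (m : ℕ) (a : ℝ → Fin (2 ^ m - 1) → ℝ)
    (hflow : ∀ t ≥ (0 : ℝ), ∀ i, HasDerivAt (fun s => a s i)
        (a t i * bVec m (a t) i / Dden m (a t)) t)
    (hpos : ∀ i, 0 < a 0 i) :
    ∀ t ≥ (0 : ℝ), ∀ i, 0 < a t i := by
  intro t ht i
  set A : ℝ → Fin (2 ^ m - 1) → ℝ := fun s => a (max s 0) with hA
  have haC : ContinuousOn a (Set.Ici (0:ℝ)) := fun s hs =>
    (continuousAt_pi.mpr fun j => (hflow s hs j).continuousAt).continuousWithinAt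
  have hAC : Continuous A :=
    haC.comp_continuous (continuous_id.max continuous_const) fun s => le_max_right s 0
  set g : ℝ → ℝ := fun s => bVec m (A s) i / Dden m (A s) with hg
  have hgC : Continuous g :=
    ((continuous_bVec m i).comp hAC).div ((continuous_Dden m).comp hAC)
      fun s => (Dden_pos m (A s)).ne'
  set G : ℝ → ℝ := fun u => ∫ s in (0:ℝ)..u, g s with hG
  have hGd : ∀ u : ℝ, HasDerivAt G (g u) u := fun u =>
    intervalIntegral.integral_hasDerivAt_right (hgC.intervalIntegrable 0 u)
      hgC.stronglyMeasurable.stronglyMeasurableAtFilter hgC.continuousAt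
  have hGC : Continuous G := by
    exact continuous_iff_continuousAt.mpr fun u => (hGd u).continuousAt
  set h : ℝ → ℝ := fun s => a s i * Real.exp (-G s) with hh
  have hhval : ∀ x ∈ Set.Icc (0:ℝ) t, h x = h 0 := by
    refine constant_of_has_deriv_right_zero ?_ ?_
    · exact ContinuousOn.mul
        (fun s hs => ((hflow s hs.1 i).continuousAt).continuousWithinAt)
        ((Real.continuous_exp.comp hGC.neg).continuousOn)
    · intro x hx
      have hx0 : 0 ≤ x := hx.1
      have h1 : HasDerivAt (fun s => a s i)
          (a x i * bVec m (a x) i / Dden m (a x)) x := hflow x hx0 i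
      have h2 : HasDerivAt (fun s => Real.exp (-G s))
          (Real.exp (-G x) * (-(g x))) x := by
        simpa [mul_comm] using ((hGd x).neg).exp
      have h3 := h1.mul h2
      have hgx : g x = bVec m (a x) i / Dden m (a x) := by
        simp [hg, hA, max_eq_left hx0]
      have : a x i * bVec m (a x) i / Dden m (a x) * Real.exp (-G x)
          + a x i * (Real.exp (-G x) * -g x) = 0 := by
        rw [hgx]; ring
      rw [← this]
      exact h3.hasDerivWithinAt
  have hht : h t = a 0 i := by
    have := hhval t ⟨ht, le_refl t⟩
    simpa [hh, hG, intervalIntegral.integral_same] using this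
  have hexp : 0 < Real.exp (-G t) := Real.exp_pos _
  have hpt : 0 < h t := by rw [hht]; exact hpos i
  simp only [hh] at hpt
  nlinarith [hpt, hexp]

/-- energy dissipation along the flow.
If `a : [0,∞) → ℝ^{K−1}` solves the reduced cross-entropy gradient flow
`da_i/dt = a_i b_i(a)/D(a)` with `a_i(0) > 0`, then
`d/dt E(a(t)) = −Σ_i a_i(t) (b_i(a(t))/D(a(t)))² ≤ 0`, so `t ↦ E(a(t))` is nonincreasing. -/
theorem energy_nonincreasing_along_flow (m : ℕ) (hm : 1 ≤ m)
    (a : ℝ → Fin (2 ^ m - 1) → ℝ)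
    (hflow : ∀ t ≥ (0 : ℝ), ∀ i, HasDerivAt (fun s => a s i)
        (a t i * bVec m (a t) i / Dden m (a t)) t)
    (hpos : ∀ i, 0 < a 0 i) :
    (∀ t ≥ (0 : ℝ),
      HasDerivAt (fun s => energyE m (a s))
        (-(∑ i, a t i * (bVec m (a t) i / Dden m (a t)) ^ 2)) t ∧
      -(∑ i, a t i * (bVec m (a t) i / Dden m (a t)) ^ 2) ≤ 0) ∧
    AntitoneOn (fun t => energyE m (a t)) (Set.Ici (0 : ℝ)) := by
  have hap := flow_pos m a hflow hpos
  have hmain : ∀ t ≥ (0:ℝ),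
      HasDerivAt (fun s => energyE m (a s))
        (-(∑ i, a t i * (bVec m (a t) i / Dden m (a t)) ^ 2)) t := by
    intro t ht
    have hE := energy_deriv m a t
        (fun i => a t i * bVec m (a t) i / Dden m (a t)) (hflow t ht)
    have hDne : Dden m (a t) ≠ 0 := (Dden_pos m (a t)).ne'
    have hval : -(∑ i, a t i * bVec m (a t) i / Dden m (a t) * bVec m (a t) i)
          / Dden m (a t)
        = -(∑ i, a t i * (bVec m (a t) i / Dden m (a t)) ^ 2) := by
      rw [neg_div, Finset.sum_div]
      congr 1
      refine Finset.sum_congr rfl fun i _ => ?_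
      field_simp
    rw [← hval]
    exact hE
  have hsign : ∀ t ≥ (0:ℝ),
      -(∑ i, a t i * (bVec m (a t) i / Dden m (a t)) ^ 2) ≤ 0 := by
    intro t ht
    refine neg_nonpos.mpr (Finset.sum_nonneg fun i _ => ?_)
    exact mul_nonneg (hap t ht i).le (sq_nonneg _)
  refine ⟨fun t ht => ⟨hmain t ht, hsign t ht⟩, ?_⟩
  refine antitoneOn_of_deriv_nonpos (convex_Ici 0) ?_ ?_ ?_
  · exact fun s hs => (hmain s hs).continuousAt.continuousWithinAt
  · intro x hx
    rw [interior_Ici] at hx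
    exact (hmain x hx.le).differentiableAt.differentiableWithinAt
  · intro x hx
    rw [interior_Ici] at hx
    rw [(hmain x hx.le).deriv]
    exact hsign x hx.le
end
end

section
/- Let K = 2^m for a natural number m ≥ 1 and let a ∈ ℝ^{K−1} have all entries positive. If the vector b(a) is a constant vector, i.e., b_i(a) = b_j(a) for all i, j (equivalently Ψ·exp(−Ψa) is proportional to 1_{K−1}), then a is proportional to 1_{K−1}; hence the only full-rank stable direction of the normalized dynamics is the uniform vector â = (1/(K−1))·1_{K−1}. -/
open Matrix Finset

noncomputable section

/-- `b_i(a) = Σ_j Ψ_{ij} exp(−(Ψa)_j)`. -/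
lemma syl_symm (m : ℕ) (i j : Fin (2^m)) : sylvester m i j = sylvester m j i := by
  induction m with
  | zero => rfl
  | succ m ih =>
    simp only [sylvester, Matrix.of_apply]
    rw [ih]
    congr 1
    simp [and_comm]

lemma syl_zero (m : ℕ) (i : Fin (2^m)) : sylvester m i ⟨0, Nat.two_pow_pos m⟩ = 1 := by
  induction m with
  | zero => rfl
  | succ m ih =>
    simp only [sylvester, Matrix.of_apply]
    rw [if_neg (by intro h; exact absurd h.2 (by simp [Nat.two_pow_pos m]))]
    rw [one_mul]
    have h0 : ((⟨0, Nat.two_pow_pos (m+1)⟩ : Fin (2^(m+1))).val % 2^m) = 0 := Nat.zero_mod _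
    convert ih _ using 2
    exact Fin.ext (Nat.zero_mod _)

def lowC (m : ℕ) (j : Fin (2^m)) : Fin (2^(m+1)) :=
  Fin.cast (by omega : 2^m + 2^m = 2^(m+1)) (Fin.castAdd (2^m) j)
def highC (m : ℕ) (j : Fin (2^m)) : Fin (2^(m+1)) :=
  Fin.cast (by omega : 2^m + 2^m = 2^(m+1)) (Fin.natAdd (2^m) j)

@[simp] lemma lowC_val (m : ℕ) (j : Fin (2^m)) : (lowC m j : ℕ) = j := rfl
@[simp] lemma highC_val (m : ℕ) (j : Fin (2^m)) : (highC m j : ℕ) = 2^m + j := rfl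

lemma syl_split (m : ℕ) (f : Fin (2^(m+1)) → ℝ) :
    ∑ j, f j = ∑ j : Fin (2^m), f (lowC m j) + ∑ j : Fin (2^m), f (highC m j) := by
  rw [← (finCongr (by omega : 2^m + 2^m = 2^(m+1))).sum_comp f, Fin.sum_univ_add]
  rfl

lemma syl_apply_low (m : ℕ) (i : Fin (2^(m+1))) (j : Fin (2^m)) :
    sylvester (m+1) i (lowC m j) = sylvester m ⟨i.val % 2^m, Nat.mod_lt _ (Nat.two_pow_pos m)⟩ j := by
  simp only [sylvester, Matrix.of_apply]
  rw [if_neg (by rintro ⟨-, h⟩; rw [lowC_val] at h; exact absurd j.isLt (by omega)), one_mul]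
  congr 1
  exact Fin.ext (Nat.mod_eq_of_lt j.isLt)

lemma syl_apply_high (m : ℕ) (i : Fin (2^(m+1))) (j : Fin (2^m)) :
    sylvester (m+1) i (highC m j) =
      (if 2^m ≤ i.val then -1 else 1) * sylvester m ⟨i.val % 2^m, Nat.mod_lt _ (Nat.two_pow_pos m)⟩ j := by
  simp only [sylvester, Matrix.of_apply]
  have : (2^m + (j:ℕ)) % 2^m = (j:ℕ) := by rw [Nat.add_mod_left, Nat.mod_eq_of_lt j.isLt]
  by_cases hi : 2^m ≤ i.val
  · rw [if_pos (show 2^m ≤ i.val ∧ 2^m ≤ (highC m j).val from ⟨hi, by rw [highC_val]; omega⟩), if_pos hi]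
    congr 2
    exact Fin.ext this
  · rw [if_neg (by tauto), if_neg hi]
    congr 2
    exact Fin.ext this

lemma syl_row_sum (m : ℕ) (i : Fin (2^m)) :
    ∑ j, sylvester m i j = if i.val = 0 then (2^m : ℝ) else 0 := by
  induction m with
  | zero => simp [sylvester]
  | succ m ih =>
    rw [syl_split m (fun j => sylvester (m+1) i j)]
    simp only [syl_apply_low, syl_apply_high]
    rw [← Finset.mul_sum, ih]
    by_cases hi : 2^m ≤ i.val
    · have h0 : ¬ i.val = 0 := by have := Nat.two_pow_pos m; omega
      rw [if_pos hi, if_neg h0]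
      ring
    · rw [if_neg hi, one_mul]
      have hlt : i.val % 2^m = i.val := Nat.mod_eq_of_lt (by omega)
      simp only [hlt]
      by_cases h0 : i.val = 0
      · rw [if_pos h0, if_pos h0]; push_cast; ring
      · rw [if_neg h0, if_neg h0]; ring

lemma syl_orth (m : ℕ) (i j : Fin (2^m)) :
    ∑ k, sylvester m i k * sylvester m j k = if i = j then (2^m : ℝ) else 0 := by
  induction m with
  | zero =>
    have : i = j := by
      have hi := i.isLt; have hj := j.isLt
      apply Fin.ext; omega
    simp [sylvester, this]
  | succ m ih =>
    rw [syl_split m (fun k => sylvester (m+1) i k * sylvester (m+1) j k)]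
    simp only [syl_apply_low, syl_apply_high]
    have e1 : ∀ k : Fin (2^m), ((if 2^m ≤ i.val then (-1:ℝ) else 1) * sylvester m ⟨i.val % 2^m, Nat.mod_lt _ (Nat.two_pow_pos m)⟩ k) *
        ((if 2^m ≤ j.val then (-1:ℝ) else 1) * sylvester m ⟨j.val % 2^m, Nat.mod_lt _ (Nat.two_pow_pos m)⟩ k)
        = ((if 2^m ≤ i.val then (-1:ℝ) else 1) * (if 2^m ≤ j.val then (-1:ℝ) else 1)) *
          (sylvester m ⟨i.val % 2^m, Nat.mod_lt _ (Nat.two_pow_pos m)⟩ k * sylvester m ⟨j.val % 2^m, Nat.mod_lt _ (Nat.two_pow_pos m)⟩ k) := by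
      intro k; ring
    rw [Finset.sum_congr rfl (fun k _ => e1 k), ← Finset.mul_sum, ih]
    have hij' : (⟨i.val % 2^m, Nat.mod_lt _ (Nat.two_pow_pos m)⟩ : Fin (2^m)) = ⟨j.val % 2^m, Nat.mod_lt _ (Nat.two_pow_pos m)⟩ ↔ i.val % 2^m = j.val % 2^m := by
      simp [Fin.ext_iff]
    have hi2 := i.isLt; have hj2 := j.isLt
    have hpow : 0 < 2^m := Nat.two_pow_pos m
    by_cases hi : 2^m ≤ i.val <;> by_cases hj : 2^m ≤ j.val
    · rw [if_pos hi, if_pos hj]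
      have hmi : i.val % 2^m = i.val - 2^m := by
        conv_lhs => rw [Nat.mod_eq_sub_mod hi]
        exact Nat.mod_eq_of_lt (by omega)
      have hmj : j.val % 2^m = j.val - 2^m := by
        conv_lhs => rw [Nat.mod_eq_sub_mod hj]
        exact Nat.mod_eq_of_lt (by omega)
      have heq : ((⟨i.val % 2^m, Nat.mod_lt _ (Nat.two_pow_pos m)⟩ : Fin (2^m)) = ⟨j.val % 2^m, Nat.mod_lt _ (Nat.two_pow_pos m)⟩) ↔ i = j := by
        rw [hij', Fin.ext_iff]; omega
      by_cases h : i = j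
      · rw [if_pos h, if_pos (heq.mpr h)]; push_cast; ring
      · rw [if_neg h, if_neg (fun hc => h (heq.mp hc))]; ring
    · have : ¬ i = j := fun hc => hj (hc ▸ hi)
      rw [if_neg this, if_pos hi, if_neg hj]; ring
    · have : ¬ i = j := fun hc => hi (hc ▸ hj)
      rw [if_neg this, if_neg hi, if_pos hj]; ring
    · rw [if_neg hi, if_neg hj]
      have hmi : i.val % 2^m = i.val := Nat.mod_eq_of_lt (by omega)
      have hmj : j.val % 2^m = j.val := Nat.mod_eq_of_lt (by omega)
      have heq : ((⟨i.val % 2^m, Nat.mod_lt _ (Nat.two_pow_pos m)⟩ : Fin (2^m)) = ⟨j.val % 2^m, Nat.mod_lt _ (Nat.two_pow_pos m)⟩) ↔ i = j := by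
        rw [hij', Fin.ext_iff]; omega
      by_cases h : i = j
      · rw [if_pos h, if_pos (heq.mpr h)]; push_cast; ring
      · rw [if_neg h, if_neg (fun hc => h (heq.mp hc))]; ring

-- split off the 0-th index
lemma sum_split0 (n : ℕ) (hn : 0 < n) (f : Fin n → ℝ) :
    ∑ j, f j = f ⟨0, hn⟩ + ∑ j : Fin (n-1), f ⟨j.val + 1, by omega⟩ := by
  rw [← (finCongr (by omega : (n-1)+1 = n)).sum_comp f, Fin.sum_univ_succ]
  congr 1

def emb (m : ℕ) (i : Fin (2^m - 1)) : Fin (2^m) :=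
  ⟨i.val + 1, by have h1 := Nat.two_pow_pos m; have h2 := i.isLt; omega⟩

lemma hadCore_eq (m : ℕ) (i j : Fin (2^m - 1)) :
    hadCore m i j = sylvester m (emb m i) (emb m j) := rfl

lemma hadCore_symm (m : ℕ) (i j : Fin (2^m - 1)) : hadCore m i j = hadCore m j i := by
  rw [hadCore_eq, hadCore_eq, syl_symm]

lemma core_row_sum (m : ℕ) (i : Fin (2^m - 1)) : ∑ j, hadCore m i j = -1 := by
  have h := syl_row_sum m (emb m i)
  rw [sum_split0 (2^m) (Nat.two_pow_pos m)] at h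
  rw [if_neg (by simp [emb])] at h
  have h0 : sylvester m (emb m i) ⟨0, Nat.two_pow_pos m⟩ = 1 := syl_zero m _
  have : ∀ j : Fin (2^m - 1),
      sylvester m (emb m i) ⟨j.val + 1, by have := Nat.two_pow_pos m; have := j.isLt; omega⟩
        = hadCore m i j := fun j => rfl
  rw [Finset.sum_congr rfl (fun j _ => this j)] at h
  linarith [h, h0]

lemma core_orth (m : ℕ) (i j : Fin (2^m - 1)) :
    ∑ k, hadCore m i k * hadCore m k j = (if i = j then (2:ℝ)^m else 0) - 1 := by
  have h := syl_orth m (emb m i) (emb m j)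
  rw [sum_split0 (2^m) (Nat.two_pow_pos m)] at h
  have h0 : sylvester m (emb m i) ⟨0, Nat.two_pow_pos m⟩ *
      sylvester m (emb m j) ⟨0, Nat.two_pow_pos m⟩ = 1 := by
    rw [syl_zero, syl_zero]; ring
  have hterm : ∀ k : Fin (2^m - 1),
      sylvester m (emb m i) ⟨k.val + 1, by have := Nat.two_pow_pos m; have := k.isLt; omega⟩ *
      sylvester m (emb m j) ⟨k.val + 1, by have := Nat.two_pow_pos m; have := k.isLt; omega⟩
      = hadCore m i k * hadCore m k j := by
    intro k
    rw [hadCore_eq, hadCore_eq, syl_symm m (emb m k) (emb m j)]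
    rfl
  rw [Finset.sum_congr rfl (fun k _ => hterm k)] at h
  have hij : (emb m i = emb m j) ↔ i = j := by
    constructor
    · intro hc; apply Fin.ext; have := Fin.val_eq_of_eq hc; simpa [emb] using this
    · rintro rfl; rfl
  by_cases hc : i = j
  · rw [if_pos hc]; rw [if_pos (hij.mpr hc)] at h; push_cast at h ⊢; linarith
  · rw [if_neg hc]; rw [if_neg (fun hx => hc (hij.mp hx))] at h; linarith

lemma card_cast (m : ℕ) : ((Fintype.card (Fin (2^m - 1)) : ℝ)) = (2:ℝ)^m - 1 := by
  rw [Fintype.card_fin]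
  have h1 : 1 ≤ 2^m := Nat.one_le_two_pow
  push_cast [Nat.cast_sub h1]
  ring

lemma psi_row_sum (m : ℕ) (i : Fin (2^m - 1)) : ∑ j, PsiM m i j = (2:ℝ)^m := by
  simp only [PsiM, Matrix.of_apply]
  rw [Finset.sum_sub_distrib, core_row_sum, Finset.sum_const, nsmul_eq_mul, mul_one,
    ← Fintype.card, card_cast]
  ring

lemma psi_col_sum (m : ℕ) (j : Fin (2^m - 1)) : ∑ i, PsiM m i j = (2:ℝ)^m := by
  have : ∀ i, PsiM m i j = PsiM m j i := by
    intro i; simp only [PsiM, Matrix.of_apply, hadCore_symm m i j]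
  rw [Finset.sum_congr rfl (fun i _ => this i)]
  exact psi_row_sum m j

lemma psi_sq (m : ℕ) (i j : Fin (2^m - 1)) :
    ∑ k, PsiM m i k * PsiM m k j = (2:ℝ)^m + (if i = j then (2:ℝ)^m else 0) := by
  have expand : ∀ k, PsiM m i k * PsiM m k j
      = 1 - hadCore m i k - hadCore m k j + hadCore m i k * hadCore m k j := by
    intro k; simp only [PsiM, Matrix.of_apply]; ring
  rw [Finset.sum_congr rfl (fun k _ => expand k)]
  have hcol : ∑ k, hadCore m k j = -1 := by
    rw [Finset.sum_congr rfl (fun k _ => hadCore_symm m k j)]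
    exact core_row_sum m j
  rw [Finset.sum_add_distrib, Finset.sum_sub_distrib, Finset.sum_sub_distrib,
    core_row_sum, hcol, core_orth, Finset.sum_const, nsmul_eq_mul, mul_one, ← Fintype.card, card_cast]
  ring

lemma psi_inj (m : ℕ) (v : Fin (2^m - 1) → ℝ) (hv : (PsiM m).mulVec v = 0) : v = 0 := by
  set S := ∑ k, v k with hS
  have key : ∀ i, v i = -S := by
    intro i
    have h0 : ∑ k, PsiM m i k * ((PsiM m).mulVec v k) = 0 := by
      simp only [hv, Pi.zero_apply, mul_zero, Finset.sum_const_zero]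
    have h1 : ∑ k, PsiM m i k * ((PsiM m).mulVec v k)
        = ∑ j, (∑ k, PsiM m i k * PsiM m k j) * v j := by
      simp only [Matrix.mulVec, dotProduct, Finset.mul_sum, Finset.sum_mul]
      rw [Finset.sum_comm]
      exact Finset.sum_congr rfl fun j _ => Finset.sum_congr rfl fun k _ => by ring
    have h2 : ∑ j, (∑ k, PsiM m i k * PsiM m k j) * v j
        = (2:ℝ)^m * (S + v i) := by
      rw [Finset.sum_congr rfl (fun j _ => by rw [psi_sq])]
      simp only [add_mul, Finset.sum_add_distrib, ← Finset.mul_sum, ite_mul, zero_mul]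
      rw [Finset.sum_ite_eq Finset.univ i (fun j => (2:ℝ)^m * v j)]
      simp [hS]
      ring
    have hne : (2:ℝ)^m ≠ 0 := by positivity
    have := h1 ▸ h0
    rw [h2] at this
    have := mul_eq_zero.mp this
    rcases this with h | h
    · exact absurd h hne
    · linarith
  have hzero : S = 0 := by
    have : S = ∑ k : Fin (2^m - 1), (-S) := by
      rw [hS]; exact Finset.sum_congr rfl fun k _ => key k
    rw [Finset.sum_const, nsmul_eq_mul, ← Fintype.card] at this
    have hc := card_cast m
    have h2m : (0:ℝ) < 2^m := by positivity
    nlinarith [this, hc]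
  funext i
  simp [key i, hzero]

-- if Ψv is constant c, then v is constant c/2^m
lemma const_pullback (m : ℕ) (v : Fin (2^m - 1) → ℝ) (c : ℝ)
    (h : ∀ i, (PsiM m).mulVec v i = c) : ∀ j, v j = c / (2:ℝ)^m := by
  have hK : ((2:ℝ)^m) ≠ 0 := by positivity
  have hz : (PsiM m).mulVec (fun j => v j - c / (2:ℝ)^m) = 0 := by
    funext i
    have : (PsiM m).mulVec (fun j => v j - c / (2:ℝ)^m) i
        = (PsiM m).mulVec v i - (∑ j, PsiM m i j) * (c / (2:ℝ)^m) := by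
      simp only [Matrix.mulVec, dotProduct, mul_sub, Finset.sum_sub_distrib,
        Finset.sum_mul]
    rw [Pi.zero_apply, this, h i, psi_row_sum]
    field_simp
    ring
  have := psi_inj m _ hz
  intro j
  have := congrFun this j
  simp only [Pi.zero_apply] at this
  linarith


/-- NC is the only full-rank stable direction.
For `a ∈ ℝ^{K−1}` with all entries positive, if the vector `b(a)` is constant
(equivalently `Ψ·exp(−Ψa) ∝ 1`), then `a ∝ 1`; hence the normalized vector is the
uniform vector `â = (1/(K−1))·1`. -/
theorem full_rank_stable_direction_is_uniform (m : ℕ) (hm : 1 ≤ m)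
    (a : Fin (2 ^ m - 1) → ℝ) (hpos : ∀ i, 0 < a i)
    (hconst : ∀ i j, bVec m a i = bVec m a j) :
    (∃ c : ℝ, ∀ i, a i = c) ∧
    (∀ i, a i / (∑ j, a j) = 1 / ((2 : ℝ) ^ m - 1)) := by
  have h2 : 2 ≤ 2^m := by
    calc 2 = 2^1 := rfl
    _ ≤ 2^m := Nat.pow_le_pow_right (by norm_num) hm
  have hcard : 1 ≤ 2^m - 1 := by omega
  have i0 : Fin (2^m - 1) := ⟨0, hcard⟩
  set c := bVec m a i0 with hc
  have hb : ∀ i, (PsiM m).mulVec (fun j => Real.exp (-((PsiM m).mulVec a j))) i = c := by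
    intro i
    have : (PsiM m).mulVec (fun j => Real.exp (-((PsiM m).mulVec a j))) i = bVec m a i := rfl
    rw [this, hc]
    exact hconst i i0
  have he : ∀ j, Real.exp (-((PsiM m).mulVec a j)) = c / (2:ℝ)^m := const_pullback m _ c hb
  -- hence Ψa is constant
  have hy : ∀ j k, (PsiM m).mulVec a j = (PsiM m).mulVec a k := by
    intro j k
    have := (he j).trans (he k).symm
    have := Real.exp_injective this
    linarith
  set t := (PsiM m).mulVec a i0 with ht
  have ha : ∀ j, a j = t / (2:ℝ)^m := const_pullback m a t (fun i => hy i i0)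
  set c0 := t / (2:ℝ)^m with hc0
  have hc0pos : 0 < c0 := (ha i0) ▸ hpos i0
  constructor
  · exact ⟨c0, ha⟩
  · intro i
    have hsum : ∑ j, a j = ((2:ℝ)^m - 1) * c0 := by
      rw [Finset.sum_congr rfl (fun j _ => ha j), Finset.sum_const, nsmul_eq_mul, ← Fintype.card,
        card_cast]
    have h2m : (1:ℝ) < (2:ℝ)^m := by
      calc (1:ℝ) < 2^1 := by norm_num
      _ ≤ 2^m := by exact pow_le_pow_right₀ (by norm_num) hm
    rw [hsum, ha i]
    rw [div_eq_div_iff (by nlinarith) (by nlinarith)]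
    ring
end
end
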